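/- For 0 ≤ m ≤ k and ξ a root of U_{k+1}, the partial derivative of U_{k+1} with respect to the parameter c_m, evaluated at ξ, equals (−1)^{m+1}·U_m(ξ)^2/U_k(ξ) · ∏_{i=m+1}^{k} r_i. -/

import Mathlib

open Polynomial

noncomputable def U (c r : ℕ → ℝ) : ℕ → Polynomial ℝ
  | 0 => 1
  | 1 => X - C (c 0)
  | (k+2) => (X + C ((-1)^(k+2) * c (k+1))) * U c r (k+1) - C (r (k+1)) * U c r k

noncomputable def dd (c r : ℕ → ℝ) (ξ : ℝ) (m : ℕ) : ℕ → ℝ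
  | 0 => 0
  | 1 => if m = 0 then -1 else 0
  | (k+2) => (if m = k+1 then (-1)^(k+2) * (U c r (k+1)).eval ξ else 0)
      + (ξ + (-1)^(k+2) * c (k+1)) * dd c r ξ m (k+1) - r (k+1) * dd c r ξ m k

lemma U_eval_succ_succ (c r : ℕ → ℝ) (ξ : ℝ) (k : ℕ) :
    (U c r (k+2)).eval ξ = (ξ + (-1)^(k+2) * c (k+1)) * (U c r (k+1)).eval ξ
      - r (k+1) * (U c r k).eval ξ := by
  simp [U]

lemma hasDerivAt_U (c r : ℕ → ℝ) (ξ : ℝ) (m : ℕ) : ∀ n,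
    HasDerivAt (fun t : ℝ => (U (Function.update c m t) r n).eval ξ)
      (dd c r ξ m n) (c m) := by
  intro n
  induction n using Nat.twoStepInduction with
  | zero =>
    simpa [U, dd] using hasDerivAt_const (c m) (1:ℝ)
  | one =>
    rcases eq_or_ne m 0 with h | h
    · subst h
      have : (fun t : ℝ => (U (Function.update c 0 t) r 1).eval ξ)
          = fun t : ℝ => ξ - t := by
        funext t; simp [U]
      rw [this]
      simpa [dd, Pi.sub_def] using (hasDerivAt_const (c 0) ξ).sub (hasDerivAt_id (c 0))
    · have : (fun t : ℝ => (U (Function.update c m t) r 1).eval ξ)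
          = fun _ : ℝ => ξ - c 0 := by
        funext t; simp [U, Function.update_of_ne (Ne.symm h)]
      rw [this, dd, if_neg h]
      exact hasDerivAt_const _ _
  | more k ih ih1 =>
    have hupd : ∀ t : ℝ, (U (Function.update c m t) r (k+2)).eval ξ
        = (ξ + (-1)^(k+2) * (Function.update c m t (k+1)))
            * (U (Function.update c m t) r (k+1)).eval ξ
          - r (k+1) * (U (Function.update c m t) r k).eval ξ := by
      intro t; simp [U]
    simp only [hupd]
    have hcoef : HasDerivAt (fun t : ℝ => ξ + (-1)^(k+2) * (Function.update c m t (k+1)))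
        ((if m = k+1 then ((-1:ℝ))^(k+2) else 0)) (c m) := by
      rcases eq_or_ne m (k+1) with h | h
      · subst h
        simp only [Function.update_self, if_pos rfl]
        simpa using ((hasDerivAt_id (c (k+1))).const_mul ((-1:ℝ)^(k+2))).const_add ξ
      · simp only [Function.update_of_ne (Ne.symm h), if_neg h]
        exact hasDerivAt_const _ _
    have := (hcoef.mul ih1).sub (ih.const_mul (r (k+1)))
    have hval : Function.update c m (c m) = c := Function.update_eq_self m c
    rw [hval] at this
    refine HasDerivAt.congr_deriv this ?_
    rw [dd]
    rcases eq_or_ne m (k+1) with h | h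
    · simp only [if_pos h]
      try ring
    · simp only [if_neg h]
      try ring

lemma U_pair_ne (c r : ℕ → ℝ) (hr : ∀ k, 1 ≤ k → 0 < r k) (ξ : ℝ) :
    ∀ n, ¬((U c r n).eval ξ = 0 ∧ (U c r (n+1)).eval ξ = 0) := by
  intro n
  induction n with
  | zero => simp [U]
  | succ n ih =>
    rintro ⟨h1, h2⟩
    rw [U_eval_succ_succ, h1] at h2
    have hrn : r (n+1) ≠ 0 := ne_of_gt (hr (n+1) (by omega))
    have h3 : r (n+1) * (U c r n).eval ξ = 0 := by linarith
    rcases mul_eq_zero.mp h3 with h | h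
    · exact hrn h
    · exact ih ⟨h, h1⟩

lemma dd_eq_zero (c r : ℕ → ℝ) (ξ : ℝ) (m : ℕ) : ∀ n, n ≤ m → dd c r ξ m n = 0 := by
  intro n
  induction n using Nat.twoStepInduction with
  | zero => intro _; rfl
  | one => intro h; rw [dd, if_neg (by omega)]
  | more k ih ih1 =>
    intro h
    rw [dd, if_neg (by omega), ih (by omega), ih1 (by omega)]
    ring

lemma dd_succ_m (c r : ℕ → ℝ) (ξ : ℝ) (m : ℕ) :
    dd c r ξ m (m+1) = (-1)^(m+1) * (U c r m).eval ξ := by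
  cases m with
  | zero => simp [dd, U]
  | succ j =>
    rw [show j+1+1 = j+2 from rfl, dd, if_pos rfl,
      dd_eq_zero c r ξ (j+1) (j+1) le_rfl, dd_eq_zero c r ξ (j+1) j (by omega)]
    ring

lemma casoratian (c r : ℕ → ℝ) (ξ : ℝ) (m : ℕ) :
    ∀ k, m ≤ k → dd c r ξ m (k+1) * (U c r k).eval ξ
        - dd c r ξ m k * (U c r (k+1)).eval ξ
      = (-1)^(m+1) * ((U c r m).eval ξ)^2 * ∏ i ∈ Finset.Icc (m+1) k, r i := by
  intro k hk
  induction k, hk using Nat.le_induction with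
  | base =>
    rw [dd_succ_m, dd_eq_zero c r ξ m m le_rfl,
      Finset.Icc_eq_empty (by omega : ¬ m+1 ≤ m)]
    simp
    ring
  | succ k hk ih =>
    have hprod : ∏ i ∈ Finset.Icc (m+1) (k+1), r i
        = (∏ i ∈ Finset.Icc (m+1) k, r i) * r (k+1) := by
      rw [Finset.prod_Icc_succ_top (by omega)]
    rw [show k+1+1 = k+2 from rfl, dd, if_neg (by omega), U_eval_succ_succ, hprod]
    linear_combination r (k+1) * ih

/-- Partial derivative of `U_{k+1}(ξ)` with respect to the parameter `c_m`. -/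
theorem stmt14 (c r : ℕ → ℝ) (hr : ∀ k, 1 ≤ k → 0 < r k) (k m : ℕ) (hm : m ≤ k)
    (ξ : ℝ) (hξ : (U c r (k+1)).eval ξ = 0) :
    deriv (fun t : ℝ => (U (Function.update c m t) r (k+1)).eval ξ) (c m) =
      (-1)^(m+1) * ((U c r m).eval ξ)^2 / (U c r k).eval ξ *
        ∏ i ∈ Finset.Icc (m+1) k, r i := by
  rw [(hasDerivAt_U c r ξ m (k+1)).deriv]
  have hk0 : (U c r k).eval ξ ≠ 0 := fun h => U_pair_ne c r hr ξ k ⟨h, hξ⟩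
  have hW := casoratian c r ξ m k hm
  rw [hξ, mul_zero, sub_zero] at hW
  field_simp
  linear_combination hW
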